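/- Let α ∈ [0, 1), let ξ₁, ξ₂ be nonnegative integrable random variables on the same probability space, let W be a Brownian motion, and for i = 1, 2 let (ℓ^i, X^i, L^i) denote the solution of X^i(t) = ξ_i + W(t) − α ℓ^i(t) + L^i(t) with ℓ^i(t) = E[L^i(t)] and (X^i, L^i) the Skorokhod problem solution for ξ_i + W − αℓ^i (both driven by the same W). Then for all t ≥ 0: sup_{0≤s≤t} |ℓ¹(s) − ℓ²(s)| ≤ E|ξ₁ − ξ₂| / (1 − α), sup_{0≤s≤t} E|L¹(s) − L²(s)| ≤ E|ξ₁ − ξ₂|/(1 − α), and E|X¹(t) − X²(t)| ≤ (2/(1 − α)) E|ξ₁ − ξ₂|. -/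

import Mathlib

open Set Filter MeasureTheory ProbabilityTheory
open scoped ENNReal NNReal


lemma aux_sSup_range (a : ℕ → ℝ) (ha : ∀ n, 0 ≤ a n) :
    sSup (Set.range a) = (⨆ n, ENNReal.ofReal (a n)).toReal := by
  by_cases hb : BddAbove (Set.range a)
  · have hT0 : 0 ≤ sSup (Set.range a) := Real.sSup_nonneg (by rintro x ⟨n, rfl⟩; exact ha n)
    have hle : (⨆ n, ENNReal.ofReal (a n)) ≤ ENNReal.ofReal (sSup (Set.range a)) := by
      refine iSup_le fun n => ENNReal.ofReal_le_ofReal ?_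
      exact le_csSup hb ⟨n, rfl⟩
    have hne : (⨆ n, ENNReal.ofReal (a n)) ≠ ⊤ :=
      ne_top_of_le_ne_top ENNReal.ofReal_ne_top hle
    refine le_antisymm ?_ ?_
    · refine csSup_le (Set.range_nonempty a) ?_
      rintro x ⟨n, rfl⟩
      have h1 : ENNReal.ofReal (a n) ≤ ⨆ n, ENNReal.ofReal (a n) := le_iSup (fun n => ENNReal.ofReal (a n)) n
      have := ENNReal.toReal_mono hne h1
      rwa [ENNReal.toReal_ofReal (ha n)] at this
    · have := ENNReal.toReal_mono ENNReal.ofReal_ne_top hle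
      rwa [ENNReal.toReal_ofReal hT0] at this
  · rw [Real.sSup_of_not_bddAbove hb]
    have : (⨆ n, ENNReal.ofReal (a n)) = ⊤ := by
      by_contra h
      apply hb
      refine ⟨(⨆ n, ENNReal.ofReal (a n)).toReal, ?_⟩
      rintro x ⟨n, rfl⟩
      have h1 : ENNReal.ofReal (a n) ≤ ⨆ n, ENNReal.ofReal (a n) := le_iSup (fun n => ENNReal.ofReal (a n)) n
      have := ENNReal.toReal_mono h h1
      rwa [ENNReal.toReal_ofReal (ha n)] at this
    rw [this, ENNReal.toReal_top]


lemma aux_D (c : ℝ → ℝ) (s : ℝ) (hs : 0 ≤ s) :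
    ∃ D : Set ℝ, D.Countable ∧ 0 ∈ D ∧ D ⊆ Set.Icc 0 s ∧
      ∀ (p q r : ℚ) (u : ℝ), u ∈ Set.Icc 0 s → u ∈ Set.Icc (p : ℝ) q → (r : ℝ) < c u →
        ∃ v ∈ D, v ∈ Set.Icc (p : ℝ) q ∧ (r : ℝ) < c v := by
  classical
  let T : ℚ × ℚ × ℚ → Set ℝ := fun x =>
    {u | u ∈ Set.Icc 0 s ∧ u ∈ Set.Icc (x.1 : ℝ) x.2.1 ∧ (x.2.2 : ℝ) < c u}
  let pick : ℚ × ℚ × ℚ → Set ℝ := fun x =>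
    if h : (T x).Nonempty then {h.choose} else ∅
  refine ⟨insert 0 (⋃ x, pick x), ?_, Set.mem_insert _ _, ?_, ?_⟩
  · refine (Set.countable_iUnion fun x => ?_).insert 0
    by_cases h : (T x).Nonempty <;> simp [pick, h]
  · rintro v (rfl | hv)
    · exact ⟨le_refl 0, hs⟩
    · obtain ⟨x, hx⟩ := Set.mem_iUnion.1 hv
      by_cases h : (T x).Nonempty
      · simp only [pick, dif_pos h, Set.mem_singleton_iff] at hx
        subst hx; exact h.choose_spec.1
      · simp [pick, dif_neg h] at hx
  · intro p q r u hu hpq hr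
    have hne : (T (p, q, r)).Nonempty := ⟨u, hu, hpq, hr⟩
    refine ⟨hne.choose, Set.mem_insert_of_mem _ (Set.mem_iUnion.2 ⟨(p, q, r), ?_⟩),
      hne.choose_spec.2.1, hne.choose_spec.2.2⟩
    simp [pick, dif_pos hne]

lemma measurable_L {Ω : Type*} [MeasurableSpace Ω] (c : ℝ → ℝ) (ξ : Ω → ℝ) (hξ : Measurable ξ)
    (W : ℝ → Ω → ℝ) (hWc : ∀ ω, Continuous fun t => W t ω) (hWm : ∀ t, Measurable (W t))
    (s : ℝ) (hs : 0 ≤ s) :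
    Measurable (fun ω => sSup ((fun u => max (-(ξ ω + W u ω - c u)) 0) '' Set.Icc 0 s)) := by
  classical
  obtain ⟨D, hDc, hD0, hDsub, hDprop⟩ := aux_D c s hs
  obtain ⟨d, hd⟩ := hDc.exists_eq_range ⟨0, hD0⟩
  have hdmem : ∀ n, d n ∈ Set.Icc 0 s := fun n => hDsub (hd ▸ Set.mem_range_self n)
  have key : ∀ ω, sSup ((fun u => max (-(ξ ω + W u ω - c u)) 0) '' Set.Icc 0 s)
      = sSup (Set.range fun n => max (-(ξ ω + W (d n) ω - c (d n))) 0) := by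
    intro ω
    set f : ℝ → ℝ := fun u => max (-(ξ ω + W u ω - c u)) 0 with hf
    have approx : ∀ u ∈ Set.Icc (0 : ℝ) s, ∀ ε > (0 : ℝ), ∃ n, f u ≤ f (d n) + ε := by
      intro u hu ε hε
      obtain ⟨δ, hδ, hδW⟩ := Metric.continuous_iff.1 (hWc ω) u (ε / 2) (half_pos hε)
      obtain ⟨p, hp1, hp2⟩ := exists_rat_btwn (sub_lt_self u hδ)
      obtain ⟨q, hq1, hq2⟩ := exists_rat_btwn (lt_add_of_pos_right u hδ)
      obtain ⟨r, hr1, hr2⟩ := exists_rat_btwn (sub_lt_self (c u) (half_pos hε))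
      obtain ⟨v, hvD, hvpq, hvr⟩ := hDprop p q r u hu ⟨le_of_lt hp2, le_of_lt hq1⟩ hr2
      obtain ⟨n, rfl⟩ : ∃ n, d n = v := by rwa [hd, Set.mem_range] at hvD
      refine ⟨n, ?_⟩
      have hdist : dist (d n) u < δ := by
        rw [Real.dist_eq, abs_sub_lt_iff]
        constructor <;> [skip; skip] <;>
          · have h1 := hvpq.1; have h2 := hvpq.2; linarith
      have hW := hδW (d n) hdist
      rw [Real.dist_eq, abs_sub_lt_iff] at hW
      have hx : -(ξ ω + W u ω - c u) ≤ -(ξ ω + W (d n) ω - c (d n)) + ε := by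
        have := hW.1; have := hW.2; linarith
      calc f u ≤ max (-(ξ ω + W (d n) ω - c (d n)) + ε) 0 :=
            max_le_max hx (le_refl 0)
        _ ≤ f (d n) + ε := by
            apply max_le
            · exact add_le_add (le_max_left _ _) (le_refl ε)
            · have : (0:ℝ) ≤ f (d n) := le_max_right _ _
              linarith
    have hrsub : (Set.range fun n => f (d n)) ⊆ f '' Set.Icc 0 s := by
      rintro x ⟨n, rfl⟩; exact ⟨d n, hdmem n, rfl⟩
    by_cases hb : BddAbove (f '' Set.Icc 0 s)
    · have hbr : BddAbove (Set.range fun n => f (d n)) := hb.mono hrsub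
      apply le_antisymm
      · refine csSup_le ⟨f 0, ⟨0, ⟨le_refl 0, hs⟩, rfl⟩⟩ ?_
        rintro x ⟨u, hu, rfl⟩
        refine le_of_forall_pos_le_add fun ε hε => ?_
        obtain ⟨n, hn⟩ := approx u hu ε hε
        exact hn.trans (add_le_add (le_csSup hbr ⟨n, rfl⟩) (le_refl ε))
      · exact csSup_le_csSup hb ⟨f (d 0), ⟨0, rfl⟩⟩ hrsub
    · rw [Real.sSup_of_not_bddAbove hb, Real.sSup_of_not_bddAbove ?_]
      intro ⟨b, hbb⟩
      apply hb
      refine ⟨b + 1, ?_⟩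
      rintro x ⟨u, hu, rfl⟩
      obtain ⟨n, hn⟩ := approx u hu 1 one_pos
      exact hn.trans (add_le_add (hbb ⟨n, rfl⟩) (le_refl 1))
  have heq : (fun ω => sSup ((fun u => max (-(ξ ω + W u ω - c u)) 0) '' Set.Icc 0 s))
      = fun ω => (⨆ n, ENNReal.ofReal (max (-(ξ ω + W (d n) ω - c (d n))) 0)).toReal := by
    funext ω
    rw [key ω, aux_sSup_range _ (fun n => le_max_right _ _)]
  rw [heq]
  exact Measurable.ennreal_toReal (Measurable.iSup fun n =>
    Measurable.ennreal_ofReal (((hξ.add (hWm (d n))).sub_const (c (d n))).neg.max measurable_const))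


lemma sSup_eq_zero_of_unbdd (c : ℝ → ℝ) {s : ℝ} (hc : ¬BddAbove (c '' Set.Icc 0 s))
    (x : ℝ) (w : ℝ → ℝ) (hw : Continuous w) :
    sSup ((fun u => max (-(x + w u - c u)) 0) '' Set.Icc 0 s) = 0 := by
  apply Real.sSup_of_not_bddAbove
  rintro ⟨b, hb⟩
  apply hc
  obtain ⟨B, hB⟩ : BddAbove (w '' Set.Icc 0 s) :=
    isCompact_Icc.bddAbove_image hw.continuousOn
  refine ⟨b + x + B, ?_⟩
  rintro y ⟨u, hu, rfl⟩
  have h1 : max (-(x + w u - c u)) 0 ≤ b := hb ⟨u, hu, rfl⟩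
  have h2 : -(x + w u - c u) ≤ max (-(x + w u - c u)) 0 := le_max_left _ _
  have h3 : w u ≤ B := hB ⟨u, hu, rfl⟩
  linarith

lemma bddAbove_L_img (c : ℝ → ℝ) {s : ℝ}
    (hb : BddAbove (c '' Set.Icc 0 s)) (x : ℝ) (w : ℝ → ℝ) (hw : Continuous w) :
    BddAbove ((fun u => max (-(x + w u - c u)) 0) '' Set.Icc 0 s) := by
  obtain ⟨B, hB⟩ : BddAbove ((fun u => -w u) '' Set.Icc 0 s) :=
    isCompact_Icc.bddAbove_image hw.neg.continuousOn
  obtain ⟨b, hbb⟩ := hb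
  refine ⟨max (b - x + B) 0, ?_⟩
  rintro y ⟨u, hu, rfl⟩
  have h1 : c u ≤ b := hbb ⟨u, hu, rfl⟩
  have h2 : -w u ≤ B := hB ⟨u, hu, rfl⟩
  exact max_le_max (by linarith) (le_refl 0)

lemma lip_sSup (c₁ c₂ : ℝ → ℝ) {s : ℝ} (hs : 0 ≤ s)
    (hb₁ : BddAbove (c₁ '' Set.Icc 0 s)) (hb₂ : BddAbove (c₂ '' Set.Icc 0 s))
    {S : ℝ} (hS : ∀ u ∈ Set.Icc (0 : ℝ) s, |c₁ u - c₂ u| ≤ S)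
    (x₁ x₂ : ℝ) (w : ℝ → ℝ) (hw : Continuous w) :
    |sSup ((fun u => max (-(x₁ + w u - c₁ u)) 0) '' Set.Icc 0 s)
      - sSup ((fun u => max (-(x₂ + w u - c₂ u)) 0) '' Set.Icc 0 s)| ≤ |x₁ - x₂| + S := by
  have hB₁ := bddAbove_L_img c₁ hb₁ x₁ w hw
  have hB₂ := bddAbove_L_img c₂ hb₂ x₂ w hw
  have hptw : ∀ u ∈ Set.Icc (0 : ℝ) s,
      |max (-(x₁ + w u - c₁ u)) 0 - max (-(x₂ + w u - c₂ u)) 0| ≤ |x₁ - x₂| + S := by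
    intro u hu
    refine (abs_max_sub_max_le_abs _ _ _).trans ?_
    have h1 : |c₁ u - c₂ u| ≤ S := hS u hu
    have h2 : -(x₁ + w u - c₁ u) - -(x₂ + w u - c₂ u) = -(x₁ - x₂) + (c₁ u - c₂ u) := by ring
    rw [h2]
    refine (abs_add_le _ _).trans ?_
    rw [abs_neg]
    linarith
  rw [abs_sub_le_iff]
  constructor
  · rw [sub_le_iff_le_add]
    refine csSup_le ⟨_, ⟨0, ⟨le_refl 0, hs⟩, rfl⟩⟩ ?_
    rintro y ⟨u, hu, rfl⟩
    have h1 : max (-(x₂ + w u - c₂ u)) 0 ≤ sSup ((fun u => max (-(x₂ + w u - c₂ u)) 0) '' Set.Icc 0 s) :=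
      le_csSup hB₂ ⟨u, hu, rfl⟩
    have h2 := hptw u hu
    rw [abs_sub_le_iff] at h2
    linarith [h2.1]
  · rw [sub_le_iff_le_add]
    refine csSup_le ⟨_, ⟨0, ⟨le_refl 0, hs⟩, rfl⟩⟩ ?_
    rintro y ⟨u, hu, rfl⟩
    have h1 : max (-(x₁ + w u - c₁ u)) 0 ≤ sSup ((fun u => max (-(x₁ + w u - c₁ u)) 0) '' Set.Icc 0 s) :=
      le_csSup hB₁ ⟨u, hu, rfl⟩
    have h2 := hptw u hu
    rw [abs_sub_le_iff] at h2
    linarith [h2.2]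

/-- A standard (one-dimensional) Brownian motion: starts at zero, has continuous paths,
Gaussian increments of the correct variance, and independent increments over disjoint
intervals. -/
def IsStandardBM {Ω : Type*} [MeasureSpace Ω] (B : ℝ → Ω → ℝ) : Prop :=
  (∀ ω, B 0 ω = 0) ∧
  (∀ ω, Continuous fun t => B t ω) ∧
  (∀ t : ℝ, Measurable (B t)) ∧
  (∀ s t : ℝ, 0 ≤ s → s ≤ t →
    MeasureTheory.Measure.map (fun ω => B t ω - B s ω) (ℙ : MeasureTheory.Measure Ω) =
      ProbabilityTheory.gaussianReal 0 (Real.toNNReal (t - s))) ∧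
  (∀ s t u v : ℝ, 0 ≤ s → s ≤ t → t ≤ u → u ≤ v →
    ProbabilityTheory.IndepFun (fun ω => B t ω - B s ω) (fun ω => B v ω - B u ω)
      (ℙ : MeasureTheory.Measure Ω))

/-- Subcritical stability (`α < 1`): for two solutions of the McKean–Vlasov SDE driven by
the same Brownian motion with integrable initial conditions `ξ₁`, `ξ₂`, one has
`sup_{s ≤ t} |ℓ¹ − ℓ²| ≤ E|ξ₁ − ξ₂|/(1 − α)`, `sup_{s ≤ t} E|L¹ − L²| ≤ E|ξ₁ − ξ₂|/(1 − α)`,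
and `E|X¹(t) − X²(t)| ≤ 2 E|ξ₁ − ξ₂|/(1 − α)`. -/
theorem mckean_vlasov_subcritical_stability {Ω : Type*} [MeasureSpace Ω]
    [IsProbabilityMeasure (ℙ : Measure Ω)]
    (α : ℝ) (hα0 : 0 ≤ α) (hα1 : α < 1)
    (ξ₁ ξ₂ : Ω → ℝ) (h1meas : Measurable ξ₁) (h2meas : Measurable ξ₂)
    (h1nn : ∀ ω, 0 ≤ ξ₁ ω) (h2nn : ∀ ω, 0 ≤ ξ₂ ω)
    (h1int : Integrable ξ₁ (ℙ : Measure Ω)) (h2int : Integrable ξ₂ (ℙ : Measure Ω))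
    (W : ℝ → Ω → ℝ) (hW : IsStandardBM W)
    (ℓ₁ ℓ₂ : ℝ → ℝ) (L₁ L₂ X₁ X₂ : ℝ → Ω → ℝ)
    (hL₁ : ∀ t : ℝ, 0 ≤ t → ∀ ω, L₁ t ω =
      sSup ((fun s => max (-(ξ₁ ω + W s ω - α * ℓ₁ s)) 0) '' Set.Icc 0 t))
    (hℓ₁ : ∀ t : ℝ, 0 ≤ t → ℓ₁ t = ∫ ω, L₁ t ω)
    (hX₁ : ∀ t : ℝ, 0 ≤ t → ∀ ω, X₁ t ω = ξ₁ ω + W t ω - α * ℓ₁ t + L₁ t ω)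
    (hL₂ : ∀ t : ℝ, 0 ≤ t → ∀ ω, L₂ t ω =
      sSup ((fun s => max (-(ξ₂ ω + W s ω - α * ℓ₂ s)) 0) '' Set.Icc 0 t))
    (hℓ₂ : ∀ t : ℝ, 0 ≤ t → ℓ₂ t = ∫ ω, L₂ t ω)
    (hX₂ : ∀ t : ℝ, 0 ≤ t → ∀ ω, X₂ t ω = ξ₂ ω + W t ω - α * ℓ₂ t + L₂ t ω) :
    ∀ t : ℝ, 0 ≤ t →
      (∀ s ∈ Set.Icc (0 : ℝ) t,
        |ℓ₁ s - ℓ₂ s| ≤ (∫ ω, |ξ₁ ω - ξ₂ ω|) / (1 - α)) ∧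
      (∀ s ∈ Set.Icc (0 : ℝ) t,
        (∫ ω, |L₁ s ω - L₂ s ω|) ≤ (∫ ω, |ξ₁ ω - ξ₂ ω|) / (1 - α)) ∧
      (∫ ω, |X₁ t ω - X₂ t ω|) ≤ (2 / (1 - α)) * ∫ ω, |ξ₁ ω - ξ₂ ω| := by
  intro t ht
  have hWc : ∀ ω, Continuous fun u => W u ω := hW.2.1
  have hWm : ∀ u : ℝ, Measurable (W u) := hW.2.2.1
  have h1α : 0 < 1 - α := by linarith
  set E := ∫ ω, |ξ₁ ω - ξ₂ ω| with hE
  have hEint : Integrable (fun ω => |ξ₁ ω - ξ₂ ω|) (ℙ : Measure Ω) := (h1int.sub h2int).abs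
  have hE0 : 0 ≤ E := integral_nonneg fun ω => abs_nonneg _
  set C := α * E / (1 - α) with hC
  have hC0 : 0 ≤ C := div_nonneg (mul_nonneg hα0 hE0) h1α.le
  set Sf : ℝ → ℝ := fun r => sSup ((fun u => |α * ℓ₁ u - α * ℓ₂ u|) '' Set.Icc 0 r) with hSf
  -- nonnegativity of L and ℓ
  have hL1nn : ∀ u : ℝ, 0 ≤ u → ∀ ω, 0 ≤ L₁ u ω := by
    intro u hu ω
    rw [hL₁ u hu ω]
    exact Real.sSup_nonneg (by rintro x ⟨v, hv, rfl⟩; exact le_max_right _ _)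
  have hL2nn : ∀ u : ℝ, 0 ≤ u → ∀ ω, 0 ≤ L₂ u ω := by
    intro u hu ω
    rw [hL₂ u hu ω]
    exact Real.sSup_nonneg (by rintro x ⟨v, hv, rfl⟩; exact le_max_right _ _)
  have hl1nn : ∀ u : ℝ, 0 ≤ u → 0 ≤ ℓ₁ u := fun u hu => by
    rw [hℓ₁ u hu]; exact integral_nonneg (hL1nn u hu)
  have hl2nn : ∀ u : ℝ, 0 ≤ u → 0 ≤ ℓ₂ u := fun u hu => by
    rw [hℓ₂ u hu]; exact integral_nonneg (hL2nn u hu)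
  -- measurability
  have hLmeas₁ : ∀ u : ℝ, 0 ≤ u → Measurable (L₁ u) := by
    intro u hu
    have h := measurable_L (fun v => α * ℓ₁ v) ξ₁ h1meas W hWc hWm u hu
    have he : L₁ u = fun ω =>
        sSup ((fun v => max (-(ξ₁ ω + W v ω - α * ℓ₁ v)) 0) '' Set.Icc 0 u) :=
      funext (hL₁ u hu)
    rw [he]; exact h
  have hLmeas₂ : ∀ u : ℝ, 0 ≤ u → Measurable (L₂ u) := by
    intro u hu
    have h := measurable_L (fun v => α * ℓ₂ v) ξ₂ h2meas W hWc hWm u hu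
    have he : L₂ u = fun ω =>
        sSup ((fun v => max (-(ξ₂ ω + W v ω - α * ℓ₂ v)) 0) '' Set.Icc 0 u) :=
      funext (hL₂ u hu)
    rw [he]; exact h
  -- facts about Sf
  have hSnn : ∀ r : ℝ, 0 ≤ Sf r := fun r =>
    Real.sSup_nonneg (by rintro x ⟨v, hv, rfl⟩; exact abs_nonneg _)
  have hSbdd : ∀ s : ℝ, 0 ≤ s → BddAbove ((fun u => α * ℓ₁ u) '' Set.Icc 0 s) →
      BddAbove ((fun u => α * ℓ₂ u) '' Set.Icc 0 s) →
      BddAbove ((fun u => |α * ℓ₁ u - α * ℓ₂ u|) '' Set.Icc 0 s) := by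
    intro s hs ⟨b₁, hb₁⟩ ⟨b₂, hb₂⟩
    refine ⟨b₁ + b₂, ?_⟩
    rintro x ⟨u, hu, rfl⟩
    have h1 : α * ℓ₁ u ≤ b₁ := hb₁ ⟨u, hu, rfl⟩
    have h2 : α * ℓ₂ u ≤ b₂ := hb₂ ⟨u, hu, rfl⟩
    have h3 : 0 ≤ α * ℓ₁ u := mul_nonneg hα0 (hl1nn u hu.1)
    have h4 : 0 ≤ α * ℓ₂ u := mul_nonneg hα0 (hl2nn u hu.1)
    exact abs_le.2 ⟨by linarith, by linarith⟩
  have hmemS : ∀ s : ℝ, 0 ≤ s → BddAbove ((fun u => α * ℓ₁ u) '' Set.Icc 0 s) →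
      BddAbove ((fun u => α * ℓ₂ u) '' Set.Icc 0 s) →
      ∀ u ∈ Set.Icc (0 : ℝ) s, |α * ℓ₁ u - α * ℓ₂ u| ≤ Sf s := by
    intro s hs hb1 hb2 u hu
    exact le_csSup (hSbdd s hs hb1 hb2) ⟨u, hu, rfl⟩
  have hSmono : ∀ u s : ℝ, 0 ≤ u → u ≤ s →
      BddAbove ((fun v => α * ℓ₁ v) '' Set.Icc 0 s) →
      BddAbove ((fun v => α * ℓ₂ v) '' Set.Icc 0 s) → Sf u ≤ Sf s := by
    intro u s hu hus hb1 hb2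
    exact csSup_le_csSup (hSbdd s (hu.trans hus) hb1 hb2)
      ⟨|α * ℓ₁ 0 - α * ℓ₂ 0|, ⟨0, ⟨le_refl 0, hu⟩, rfl⟩⟩
      (Set.image_mono (Set.Icc_subset_Icc_right hus))
  -- pointwise Lipschitz bound
  have hptw : ∀ s : ℝ, 0 ≤ s → BddAbove ((fun u => α * ℓ₁ u) '' Set.Icc 0 s) →
      BddAbove ((fun u => α * ℓ₂ u) '' Set.Icc 0 s) →
      ∀ ω, |L₁ s ω - L₂ s ω| ≤ |ξ₁ ω - ξ₂ ω| + Sf s := by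
    intro s hs hb1 hb2 ω
    rw [hL₁ s hs ω, hL₂ s hs ω]
    exact lip_sSup (fun u => α * ℓ₁ u) (fun u => α * ℓ₂ u) hs hb1 hb2
      (fun u hu => hmemS s hs hb1 hb2 u hu) (ξ₁ ω) (ξ₂ ω) (fun u => W u ω) (hWc ω)
  have hbndint : ∀ s : ℝ, Integrable (fun ω => |ξ₁ ω - ξ₂ ω| + Sf s) (ℙ : Measure Ω) :=
    fun s => hEint.add (integrable_const _)
  have hdiffint : ∀ s : ℝ, 0 ≤ s → BddAbove ((fun u => α * ℓ₁ u) '' Set.Icc 0 s) →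
      BddAbove ((fun u => α * ℓ₂ u) '' Set.Icc 0 s) →
      Integrable (fun ω => L₁ s ω - L₂ s ω) (ℙ : Measure Ω) := by
    intro s hs hb1 hb2
    refine Integrable.mono' (hbndint s)
      (((hLmeas₁ s hs).sub (hLmeas₂ s hs)).aestronglyMeasurable) ?_
    exact ae_of_all _ fun ω => by
      rw [Real.norm_eq_abs]; exact hptw s hs hb1 hb2 ω
  have hintabs : ∀ s : ℝ, 0 ≤ s → BddAbove ((fun u => α * ℓ₁ u) '' Set.Icc 0 s) →
      BddAbove ((fun u => α * ℓ₂ u) '' Set.Icc 0 s) →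
      (∫ ω, |L₁ s ω - L₂ s ω|) ≤ E + Sf s := by
    intro s hs hb1 hb2
    have h := integral_mono_of_nonneg (ae_of_all _ fun ω => abs_nonneg (L₁ s ω - L₂ s ω))
      (hbndint s) (ae_of_all _ (hptw s hs hb1 hb2))
    calc (∫ ω, |L₁ s ω - L₂ s ω|) ≤ ∫ ω, (|ξ₁ ω - ξ₂ ω| + Sf s) := h
      _ = E + Sf s := by
          rw [integral_add hEint (integrable_const _), integral_const, probReal_univ,
            one_smul]
  have hldiff : ∀ s : ℝ, 0 ≤ s → BddAbove ((fun u => α * ℓ₁ u) '' Set.Icc 0 s) →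
      BddAbove ((fun u => α * ℓ₂ u) '' Set.Icc 0 s) → |ℓ₁ s - ℓ₂ s| ≤ E + Sf s := by
    intro s hs hb1 hb2
    rw [hℓ₁ s hs, hℓ₂ s hs]
    by_cases hint : Integrable (L₁ s) (ℙ : Measure Ω)
    · have hint2 : Integrable (L₂ s) (ℙ : Measure Ω) := by
        have he : L₂ s = fun ω => L₁ s ω - (L₁ s ω - L₂ s ω) := by funext ω; ring
        rw [he]; exact hint.sub (hdiffint s hs hb1 hb2)
      rw [← integral_sub hint hint2]
      calc |∫ ω, (L₁ s ω - L₂ s ω)| ≤ ∫ ω, |L₁ s ω - L₂ s ω| := by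
            simpa [Real.norm_eq_abs] using
              norm_integral_le_integral_norm (μ := (ℙ : Measure Ω)) (fun ω => L₁ s ω - L₂ s ω)
        _ ≤ E + Sf s := hintabs s hs hb1 hb2
    · have hint2 : ¬ Integrable (L₂ s) (ℙ : Measure Ω) := by
        intro h
        apply hint
        have he : L₁ s = fun ω => L₂ s ω + (L₁ s ω - L₂ s ω) := by funext ω; ring
        rw [he]; exact h.add (hdiffint s hs hb1 hb2)
      rw [integral_undef hint, integral_undef hint2]
      simpa using add_nonneg hE0 (hSnn s)
  have hSbound : ∀ s : ℝ, 0 ≤ s → BddAbove ((fun u => α * ℓ₁ u) '' Set.Icc 0 s) →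
      BddAbove ((fun u => α * ℓ₂ u) '' Set.Icc 0 s) → Sf s ≤ C := by
    intro s hs hb1 hb2
    have key : Sf s ≤ α * E + α * Sf s := by
      refine csSup_le ⟨|α * ℓ₁ 0 - α * ℓ₂ 0|, ⟨0, ⟨le_refl 0, hs⟩, rfl⟩⟩ ?_
      rintro x ⟨u, hu, rfl⟩
      show |α * ℓ₁ u - α * ℓ₂ u| ≤ α * E + α * Sf s
      have hu0 : 0 ≤ u := hu.1
      have hb1u : BddAbove ((fun v => α * ℓ₁ v) '' Set.Icc 0 u) :=
        hb1.mono (Set.image_mono (Set.Icc_subset_Icc_right hu.2))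
      have hb2u : BddAbove ((fun v => α * ℓ₂ v) '' Set.Icc 0 u) :=
        hb2.mono (Set.image_mono (Set.Icc_subset_Icc_right hu.2))
      have h1 : |ℓ₁ u - ℓ₂ u| ≤ E + Sf u := hldiff u hu0 hb1u hb2u
      have h2 : Sf u ≤ Sf s := hSmono u s hu0 hu.2 hb1 hb2
      have h3 : |α * ℓ₁ u - α * ℓ₂ u| = α * |ℓ₁ u - ℓ₂ u| := by
        rw [← mul_sub, abs_mul, abs_of_nonneg hα0]
      rw [h3]
      have h4 : α * |ℓ₁ u - ℓ₂ u| ≤ α * (E + Sf u) := mul_le_mul_of_nonneg_left h1 hα0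
      nlinarith
    rw [hC, le_div_iff₀ h1α]
    linarith
  have hid : E + C = E / (1 - α) := by
    rw [hC]; field_simp; ring
  have hgoal1 : ∀ s : ℝ, 0 ≤ s → BddAbove ((fun u => α * ℓ₁ u) '' Set.Icc 0 s) →
      BddAbove ((fun u => α * ℓ₂ u) '' Set.Icc 0 s) → |ℓ₁ s - ℓ₂ s| ≤ E / (1 - α) := by
    intro s hs hb1 hb2
    have h1 := hldiff s hs hb1 hb2
    have h2 := hSbound s hs hb1 hb2
    linarith
  -- unbounded cases
  have hLzero₁ : ∀ s : ℝ, 0 ≤ s → ¬BddAbove ((fun u => α * ℓ₁ u) '' Set.Icc 0 s) →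
      (∀ ω, L₁ s ω = 0) ∧ ℓ₁ s = 0 := by
    intro s hs hb
    have h0 : ∀ ω, L₁ s ω = 0 := fun ω => by
      rw [hL₁ s hs ω]
      exact sSup_eq_zero_of_unbdd (fun v => α * ℓ₁ v) hb (ξ₁ ω) (fun v => W v ω) (hWc ω)
    exact ⟨h0, by rw [hℓ₁ s hs]; simp only [h0, integral_zero]⟩
  have hLzero₂ : ∀ s : ℝ, 0 ≤ s → ¬BddAbove ((fun u => α * ℓ₂ u) '' Set.Icc 0 s) →
      (∀ ω, L₂ s ω = 0) ∧ ℓ₂ s = 0 := by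
    intro s hs hb
    have h0 : ∀ ω, L₂ s ω = 0 := fun ω => by
      rw [hL₂ s hs ω]
      exact sSup_eq_zero_of_unbdd (fun v => α * ℓ₂ v) hb (ξ₂ ω) (fun v => W v ω) (hWc ω)
    exact ⟨h0, by rw [hℓ₂ s hs]; simp only [h0, integral_zero]⟩
  have honesided : ∀ s : ℝ, 0 ≤ s → ¬BddAbove ((fun u => α * ℓ₁ u) '' Set.Icc 0 s) →
      BddAbove ((fun u => α * ℓ₂ u) '' Set.Icc 0 s) → False := by
    intro s hs h1 h2
    obtain ⟨b₂, hb₂⟩ := h2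
    have hb₂0 : 0 ≤ b₂ :=
      le_trans (mul_nonneg hα0 (hl2nn 0 (le_refl 0))) (hb₂ ⟨0, ⟨le_refl 0, hs⟩, rfl⟩)
    obtain ⟨x, ⟨u, hu, rfl⟩, hx0⟩ := not_bddAbove_iff.1 h1 (b₂ + C)
    have hx : b₂ + C < α * ℓ₁ u := hx0
    by_cases hbu : BddAbove ((fun v => α * ℓ₁ v) '' Set.Icc 0 u)
    · have hb2u : BddAbove ((fun v => α * ℓ₂ v) '' Set.Icc 0 u) := by
        refine ⟨b₂, ?_⟩
        rintro y ⟨v, hv, rfl⟩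
        exact hb₂ ⟨v, Set.Icc_subset_Icc_right hu.2 hv, rfl⟩
      have hm : |α * ℓ₁ u - α * ℓ₂ u| ≤ Sf u :=
        hmemS u hu.1 hbu hb2u u ⟨hu.1, le_refl u⟩
      have hSu : Sf u ≤ C := hSbound u hu.1 hbu hb2u
      have hm2 : α * ℓ₂ u ≤ b₂ := hb₂ ⟨u, hu, rfl⟩
      have := (abs_le.1 hm).2
      linarith
    · have hl0 : ℓ₁ u = 0 := (hLzero₁ u hu.1 hbu).2
      rw [hl0] at hx
      simp only [mul_zero] at hx
      linarith
  have honesided' : ∀ s : ℝ, 0 ≤ s → ¬BddAbove ((fun u => α * ℓ₂ u) '' Set.Icc 0 s) →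
      BddAbove ((fun u => α * ℓ₁ u) '' Set.Icc 0 s) → False := by
    intro s hs h2 h1
    obtain ⟨b₁, hb₁⟩ := h1
    have hb₁0 : 0 ≤ b₁ :=
      le_trans (mul_nonneg hα0 (hl1nn 0 (le_refl 0))) (hb₁ ⟨0, ⟨le_refl 0, hs⟩, rfl⟩)
    obtain ⟨x, ⟨u, hu, rfl⟩, hx0⟩ := not_bddAbove_iff.1 h2 (b₁ + C)
    have hx : b₁ + C < α * ℓ₂ u := hx0
    by_cases hbu : BddAbove ((fun v => α * ℓ₂ v) '' Set.Icc 0 u)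
    · have hb1u : BddAbove ((fun v => α * ℓ₁ v) '' Set.Icc 0 u) := by
        refine ⟨b₁, ?_⟩
        rintro y ⟨v, hv, rfl⟩
        exact hb₁ ⟨v, Set.Icc_subset_Icc_right hu.2 hv, rfl⟩
      have hm : |α * ℓ₁ u - α * ℓ₂ u| ≤ Sf u :=
        hmemS u hu.1 hb1u hbu u ⟨hu.1, le_refl u⟩
      have hSu : Sf u ≤ C := hSbound u hu.1 hb1u hbu
      have hm2 : α * ℓ₁ u ≤ b₁ := hb₁ ⟨u, hu, rfl⟩
      have := (abs_le.1 hm).1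
      linarith
    · have hl0 : ℓ₂ u = 0 := (hLzero₂ u hu.1 hbu).2
      rw [hl0] at hx
      simp only [mul_zero] at hx
      linarith
  -- combined per-time bounds
  have main12 : ∀ s : ℝ, 0 ≤ s → |ℓ₁ s - ℓ₂ s| ≤ E / (1 - α) ∧
      (∫ ω, |L₁ s ω - L₂ s ω|) ≤ E / (1 - α) := by
    intro s hs
    by_cases hb1 : BddAbove ((fun u => α * ℓ₁ u) '' Set.Icc 0 s)
    · by_cases hb2 : BddAbove ((fun u => α * ℓ₂ u) '' Set.Icc 0 s)
      · refine ⟨hgoal1 s hs hb1 hb2, ?_⟩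
        have h1 := hintabs s hs hb1 hb2
        have h2 := hSbound s hs hb1 hb2
        linarith
      · exact (honesided' s hs hb2 hb1).elim
    · by_cases hb2 : BddAbove ((fun u => α * ℓ₂ u) '' Set.Icc 0 s)
      · exact (honesided s hs hb1 hb2).elim
      · have h1 := hLzero₁ s hs hb1
        have h2 := hLzero₂ s hs hb2
        constructor
        · rw [h1.2, h2.2]
          simpa using div_nonneg hE0 h1α.le
        · have he : (fun ω => |L₁ s ω - L₂ s ω|) = fun _ => (0 : ℝ) := by
            funext ω; rw [h1.1 ω, h2.1 ω]; simp
          rw [he, integral_zero]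
          exact div_nonneg hE0 h1α.le
  refine ⟨fun s hs => (main12 s hs.1).1, fun s hs => (main12 s hs.1).2, ?_⟩
  -- third goal
  by_cases hb1 : BddAbove ((fun u => α * ℓ₁ u) '' Set.Icc 0 t)
  · by_cases hb2 : BddAbove ((fun u => α * ℓ₂ u) '' Set.Icc 0 t)
    · have hptX : ∀ ω, |X₁ t ω - X₂ t ω| ≤ 2 * |ξ₁ ω - ξ₂ ω| + 2 * C := by
        intro ω
        rw [hX₁ t ht ω, hX₂ t ht ω]
        have h1 : |L₁ t ω - L₂ t ω| ≤ |ξ₁ ω - ξ₂ ω| + Sf t := hptw t ht hb1 hb2 ω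
        have h2 : Sf t ≤ C := hSbound t ht hb1 hb2
        have h3 : |α * ℓ₁ t - α * ℓ₂ t| ≤ Sf t := hmemS t ht hb1 hb2 t ⟨ht, le_refl t⟩
        have he : ξ₁ ω + W t ω - α * ℓ₁ t + L₁ t ω - (ξ₂ ω + W t ω - α * ℓ₂ t + L₂ t ω)
            = (ξ₁ ω - ξ₂ ω) - (α * ℓ₁ t - α * ℓ₂ t) + (L₁ t ω - L₂ t ω) := by ring
        rw [he]
        calc |(ξ₁ ω - ξ₂ ω) - (α * ℓ₁ t - α * ℓ₂ t) + (L₁ t ω - L₂ t ω)|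
            ≤ |(ξ₁ ω - ξ₂ ω) - (α * ℓ₁ t - α * ℓ₂ t)| + |L₁ t ω - L₂ t ω| := abs_add_le _ _
          _ ≤ (|ξ₁ ω - ξ₂ ω| + |α * ℓ₁ t - α * ℓ₂ t|) + |L₁ t ω - L₂ t ω| :=
              add_le_add (abs_sub _ _) (le_refl _)
          _ ≤ 2 * |ξ₁ ω - ξ₂ ω| + 2 * C := by linarith
      have hgint : Integrable (fun ω => 2 * |ξ₁ ω - ξ₂ ω| + 2 * C) (ℙ : Measure Ω) :=
        (hEint.const_mul 2).add (integrable_const _)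
      have h := integral_mono_of_nonneg (ae_of_all _ fun ω => abs_nonneg (X₁ t ω - X₂ t ω))
        hgint (ae_of_all _ hptX)
      have heq : (∫ ω, (2 * |ξ₁ ω - ξ₂ ω| + 2 * C)) = 2 * E + 2 * C := by
        rw [integral_add (hEint.const_mul 2) (integrable_const _), integral_const, probReal_univ,
          one_smul, integral_const_mul]
      have hfin : 2 * E + 2 * C = 2 / (1 - α) * E := by
        rw [hC]; field_simp; ring
      calc (∫ ω, |X₁ t ω - X₂ t ω|) ≤ ∫ ω, (2 * |ξ₁ ω - ξ₂ ω| + 2 * C) := h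
        _ = 2 / (1 - α) * E := by rw [heq, hfin]
    · exact (honesided' t ht hb2 hb1).elim
  · by_cases hb2 : BddAbove ((fun u => α * ℓ₂ u) '' Set.Icc 0 t)
    · exact (honesided t ht hb1 hb2).elim
    · have h1 := hLzero₁ t ht hb1
      have h2 := hLzero₂ t ht hb2
      have he : (fun ω => |X₁ t ω - X₂ t ω|) = fun ω => |ξ₁ ω - ξ₂ ω| := by
        funext ω
        rw [hX₁ t ht ω, hX₂ t ht ω, h1.2, h2.2, h1.1 ω, h2.1 ω]
        ring_nf
      rw [he]
      have : (1 : ℝ) ≤ 2 / (1 - α) := by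
        rw [le_div_iff₀ h1α]; linarith
      nlinarith [hE0]
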